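/- Let p be a prime, n ≥ 1, and T ∈ GL(n, ℚ_p) with |det T|_p = 1. If the map T̄ : S_n → S_n is distal, then T is distal on ℚ_p^n. -/

import Mathlib

open scoped MatrixGroups

/-- The real number `r`, assumed to be an integer power of `p`, interpreted as the
corresponding scalar in `ℚ_p` (junk value otherwise). -/
noncomputable def realToPadic (p : ℕ) [Fact p.Prime] (r : ℝ) : ℚ_[p] :=
  (p : ℚ_[p]) ^ ⌊Real.logb p r⌋

/-- The map `T̄` induced on the `p`-adic unit sphere by the matrix `T`:
`T̄(x) = ‖T(x)‖_p ⬝ T(x)`. -/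
noncomputable def sphereMap (p : ℕ) [Fact p.Prime] {n : ℕ}
    (T : Matrix (Fin n) (Fin n) ℚ_[p]) (y : Fin n → ℚ_[p]) : Fin n → ℚ_[p] :=
  realToPadic p ‖T.mulVec y‖ • T.mulVec y

/-- A family `S` of self-maps acts distally on an invariant subset `A`. -/
def ActsDistallyOn {X : Type*} [TopologicalSpace X] (S : Set (X → X)) (A : Set X) : Prop :=
  ∀ x ∈ A, ∀ y ∈ A, x ≠ y → ∀ d ∈ A, (d, d) ∉ closure ((fun f => (f x, f y)) '' S)

section Aux

variable (p : ℕ) [Fact p.Prime] {n : ℕ}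

lemma aux_exists_norm_coord [Nonempty (Fin n)] (v : Fin n → ℚ_[p]) :
    ∃ i, ‖v‖ = ‖v i‖ := by
  obtain ⟨i, -, hi⟩ := Finset.exists_mem_eq_sup Finset.univ Finset.univ_nonempty
    (fun i => ‖v i‖₊)
  refine ⟨i, ?_⟩
  rw [Pi.norm_def, hi]
  rfl

lemma aux_exists_zpow_norm [Nonempty (Fin n)] (v : Fin n → ℚ_[p]) (hv : v ≠ 0) :
    ∃ m : ℤ, ‖v‖ = (p : ℝ) ^ m := by
  obtain ⟨i, hi⟩ := aux_exists_norm_coord p v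
  have hvi : v i ≠ 0 := by
    intro h0
    exact hv (norm_eq_zero.mp (by rw [hi, h0, norm_zero]))
  exact ⟨-(v i).valuation, by rw [hi, Padic.norm_eq_zpow_neg_valuation hvi]⟩

lemma aux_realToPadic_zpow (m : ℤ) : realToPadic p ((p : ℝ) ^ m) = (p : ℚ_[p]) ^ m := by
  have hp1 : (1 : ℝ) < p := by exact_mod_cast (Fact.out : p.Prime).one_lt
  have hlogp : Real.log p ≠ 0 := ne_of_gt (Real.log_pos hp1)
  have hlog : Real.logb p ((p : ℝ) ^ m) = m := by
    rw [Real.logb, Real.log_zpow, mul_div_assoc, div_self hlogp, mul_one]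
  rw [realToPadic, hlog, Int.floor_intCast]

lemma aux_norm_padic_zpow (m : ℤ) : ‖((p : ℚ_[p]) ^ m)‖ = (p : ℝ) ^ (-m) := by
  rw [norm_zpow, Padic.norm_p, zpow_neg, inv_zpow]

lemma aux_pi_norm_add_le_max (a b : Fin n → ℚ_[p]) : ‖a + b‖ ≤ max ‖a‖ ‖b‖ := by
  refine (pi_norm_le_iff_of_nonneg (le_max_of_le_left (norm_nonneg a))).mpr fun i => ?_
  calc ‖(a + b) i‖ = ‖a i + b i‖ := rfl
    _ ≤ max ‖a i‖ ‖b i‖ := Padic.nonarchimedean _ _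
    _ ≤ max ‖a‖ ‖b‖ := max_le_max (norm_le_pi_norm a i) (norm_le_pi_norm b i)

lemma aux_pi_norm_add_eq_left (a b : Fin n → ℚ_[p]) (h : ‖b‖ < ‖a‖) : ‖a + b‖ = ‖a‖ := by
  refine le_antisymm ((aux_pi_norm_add_le_max p a b).trans (max_le le_rfl h.le)) ?_
  by_contra hlt
  push_neg at hlt
  have h2 : ‖a‖ ≤ max ‖a + b‖ ‖b‖ := by
    have h3 := aux_pi_norm_add_le_max p (a + b) (-b)
    simpa using h3
  rcases le_max_iff.mp h2 with h3 | h3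
  · exact absurd h3 (not_le.mpr hlt)
  · exact absurd h3 (not_le.mpr h)

lemma aux_det_norm_lt_one (hn : 1 ≤ n) (A : Matrix (Fin n) (Fin n) ℚ_[p])
    (hA : ∀ i j, ‖A i j‖ < 1) : ‖A.det‖ < 1 := by
  haveI : Nonempty (Fin n) := ⟨⟨0, hn⟩⟩
  have hne : (Finset.univ : Finset (Fin n × Fin n)).Nonempty := Finset.univ_nonempty
  set C : ℝ := Finset.univ.sup' hne (fun q : Fin n × Fin n => ‖A q.1 q.2‖) with hC
  have hCle : ∀ i j, ‖A i j‖ ≤ C := fun i j =>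
    Finset.le_sup' (f := fun q : Fin n × Fin n => ‖A q.1 q.2‖) (Finset.mem_univ (i, j))
  have hC0 : 0 ≤ C := le_trans (norm_nonneg _) (hCle (Classical.arbitrary _) (Classical.arbitrary _))
  have hC1 : C < 1 := (Finset.sup'_lt_iff hne).mpr fun q _ => hA q.1 q.2
  have hterm : ∀ σ : Equiv.Perm (Fin n),
      ‖((Equiv.Perm.sign σ : ℤ) : ℚ_[p]) * ∏ i, A (σ i) i‖ ≤ C := by
    intro σ
    have hsign : ‖((Equiv.Perm.sign σ : ℤ) : ℚ_[p])‖ = 1 := by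
      rcases Int.units_eq_one_or (Equiv.Perm.sign σ) with hs | hs <;> simp [hs]
    rw [norm_mul, hsign, one_mul, norm_prod]
    calc (∏ i, ‖A (σ i) i‖) ≤ C ^ (Finset.univ : Finset (Fin n)).card := by
          rw [← Finset.prod_const]
          exact Finset.prod_le_prod (fun i _ => norm_nonneg _) (fun i _ => hCle (σ i) i)
      _ ≤ C ^ 1 := by
          rw [Finset.card_univ, Fintype.card_fin]
          exact pow_le_pow_of_le_one hC0 hC1.le hn
      _ = C := pow_one C
  calc ‖A.det‖ ≤ C := by
        rw [Matrix.det_apply']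
        exact IsUltrametricDist.norm_sum_le_of_forall_le_of_nonneg hC0 fun σ _ => hterm σ
    _ < 1 := hC1

end Aux

/-- If `|det T|_p = 1` and `T̄` is distal on the `p`-adic unit sphere, then `T` is distal
on `ℚ_p^n`. -/
theorem stmt6 (p : ℕ) [Fact p.Prime] (n : ℕ) (hn : 1 ≤ n) (T : GL (Fin n) ℚ_[p])
    (hdet : ‖((T : Matrix (Fin n) (Fin n) ℚ_[p]).det)‖ = 1)
    (h : ActsDistallyOn {f : (Fin n → ℚ_[p]) → Fin n → ℚ_[p] |
        ∃ k : ℤ, f = sphereMap p ((T ^ k : GL (Fin n) ℚ_[p]) : Matrix (Fin n) (Fin n) ℚ_[p])}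
      (Metric.sphere (0 : Fin n → ℚ_[p]) 1)) :
    ActsDistallyOn {f : (Fin n → ℚ_[p]) → Fin n → ℚ_[p] |
        ∃ k : ℤ, f = fun v =>
          ((T ^ k : GL (Fin n) ℚ_[p]) : Matrix (Fin n) (Fin n) ℚ_[p]).mulVec v}
      Set.univ := by
  haveI : Nonempty (Fin n) := ⟨⟨0, hn⟩⟩
  intro x _ y _ hxy d _ hdd
  set M : ℤ → Matrix (Fin n) (Fin n) ℚ_[p] :=
    fun k => ((T ^ k : GL (Fin n) ℚ_[p]) : Matrix (Fin n) (Fin n) ℚ_[p]) with hM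
  -- determinant of every power has norm one
  have hdetk : ∀ k : ℤ, ‖(M k).det‖ = 1 := by
    intro k
    have h1 : (M k).det = ((Matrix.GeneralLinearGroup.det (T ^ k) : ℚ_[p]ˣ) : ℚ_[p]) :=
      (Matrix.GeneralLinearGroup.val_det_apply _).symm
    have h2 : ((Matrix.GeneralLinearGroup.det T : ℚ_[p]ˣ) : ℚ_[p])
        = (T : Matrix (Fin n) (Fin n) ℚ_[p]).det :=
      Matrix.GeneralLinearGroup.val_det_apply T
    rw [h1, map_zpow, Units.val_zpow_eq_zpow_val, norm_zpow, h2, hdet, one_zpow]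
  -- the failure of distality contracts z := x - y
  have hz : x - y ≠ 0 := sub_ne_zero.mpr hxy
  have key0 : ∀ ε : ℝ, 0 < ε → ∃ k : ℤ, ‖(M k).mulVec (x - y)‖ < ε := by
    intro ε hε
    rw [Metric.mem_closure_iff] at hdd
    obtain ⟨b, hb, hdist⟩ := hdd (ε / 2) (half_pos hε)
    obtain ⟨f, ⟨k, rfl⟩, rfl⟩ := hb
    refine ⟨k, ?_⟩
    rw [Prod.dist_eq] at hdist
    have h1 : dist d ((M k).mulVec x) < ε / 2 :=
      lt_of_le_of_lt (le_max_left _ _) hdist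
    have h2 : dist d ((M k).mulVec y) < ε / 2 :=
      lt_of_le_of_lt (le_max_right _ _) hdist
    have h3 : (M k).mulVec (x - y) = ((M k).mulVec x - d) - ((M k).mulVec y - d) := by
      rw [Matrix.mulVec_sub]
      abel
    calc ‖(M k).mulVec (x - y)‖
        ≤ ‖(M k).mulVec x - d‖ + ‖(M k).mulVec y - d‖ := by rw [h3]; exact norm_sub_le _ _
      _ < ε / 2 + ε / 2 := by
          rw [dist_eq_norm] at h1 h2
          rw [norm_sub_rev] at h1 h2
          exact add_lt_add h1 h2
      _ = ε := add_halves ε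
  -- normalize z to the unit sphere
  obtain ⟨i₀, hi₀⟩ := aux_exists_norm_coord p (x - y)
  have hzi : (x - y) i₀ ≠ 0 := by
    intro h0
    exact hz (norm_eq_zero.mp (by rw [hi₀, h0, norm_zero]))
  set c : ℚ_[p] := ((x - y) i₀)⁻¹ with hc
  have hcne : c ≠ 0 := inv_ne_zero hzi
  set z' : Fin n → ℚ_[p] := c • (x - y) with hz'
  have hz'norm : ‖z'‖ = 1 := by
    rw [hz', norm_smul, hc, norm_inv, hi₀, inv_mul_cancel₀ (norm_ne_zero_iff.mpr hzi)]
  have hz'ne : z' ≠ 0 := by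
    rw [hz']
    exact smul_ne_zero hcne hz
  have key1 : ∀ ε : ℝ, 0 < ε → ∃ k : ℤ, ‖(M k).mulVec z'‖ < ε := by
    intro ε hε
    have hzipos : 0 < ‖(x - y) i₀‖ := norm_pos_iff.mpr hzi
    obtain ⟨k, hk⟩ := key0 (ε * ‖(x - y) i₀‖) (mul_pos hε hzipos)
    refine ⟨k, ?_⟩
    rw [hz', Matrix.mulVec_smul, norm_smul, hc, norm_inv]
    rw [inv_mul_lt_iff₀ hzipos, mul_comm]
    exact hk
  -- find a basis vector not contracted at the relevant times
  have key2 : ∃ j : Fin n, ∀ ε : ℝ, 0 < ε → ∃ k : ℤ,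
      ‖(M k).mulVec z'‖ < ε ∧ 1 ≤ ‖(M k).mulVec (Pi.single j 1)‖ := by
    by_contra hcon
    push_neg at hcon
    choose εf hεf hcon using hcon
    have hne : (Finset.univ : Finset (Fin n)).Nonempty := Finset.univ_nonempty
    set ε := Finset.univ.inf' hne εf with hε
    have hεpos : 0 < ε := (Finset.lt_inf'_iff hne).mpr fun j _ => hεf j
    obtain ⟨k, hk⟩ := key1 ε hεpos
    have hcols : ∀ j, ‖(M k).mulVec (Pi.single j 1)‖ < 1 := fun j =>
      hcon j k (lt_of_lt_of_le hk (Finset.inf'_le _ (Finset.mem_univ j)))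
    have hent : ∀ i j, ‖(M k) i j‖ < 1 := by
      intro i j
      have h1 : (M k) i j = ((M k).mulVec (Pi.single j 1)) i := by
        simp [Matrix.mulVec_single]
      rw [h1]
      exact lt_of_le_of_lt (norm_le_pi_norm _ i) (hcols j)
    exact absurd (hdetk k) (ne_of_lt (aux_det_norm_lt_one p hn (M k) hent))
  obtain ⟨j, hj⟩ := key2
  -- construct the two sphere points
  set e : Fin n → ℚ_[p] := Pi.single j 1 with he
  have henorm : ‖e‖ = 1 := by
    refine le_antisymm ((pi_norm_le_iff_of_nonneg zero_le_one).mpr fun i => ?_) ?_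
    · rw [he, Pi.single_apply]
      split <;> simp
    · calc (1 : ℝ) = ‖e j‖ := by rw [he]; simp
        _ ≤ ‖e‖ := norm_le_pi_norm e j
  have hpnorm : ‖((p : ℚ_[p]) • z')‖ < 1 := by
    rw [norm_smul, hz'norm, mul_one, Padic.norm_p]
    rw [inv_lt_one_iff₀]
    right
    exact_mod_cast (Fact.out : p.Prime).one_lt
  set Y : Fin n → ℚ_[p] := e + (p : ℚ_[p]) • z' with hY
  have hYnorm : ‖Y‖ = 1 := by
    rw [hY, aux_pi_norm_add_eq_left p e _ (by rw [henorm]; exact hpnorm), henorm]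
  have hXsp : e ∈ Metric.sphere (0 : Fin n → ℚ_[p]) 1 := by
    rw [mem_sphere_zero_iff_norm]; exact henorm
  have hYsp : Y ∈ Metric.sphere (0 : Fin n → ℚ_[p]) 1 := by
    rw [mem_sphere_zero_iff_norm]; exact hYnorm
  have hpne : ((p : ℚ_[p])) ≠ 0 := by
    exact_mod_cast (Fact.out : p.Prime).ne_zero
  have hXY : e ≠ Y := by
    intro hEq
    have h0 : (p : ℚ_[p]) • z' = 0 := by
      have := congrArg (fun v => v - e) hEq
      simpa [hY] using this.symm
    exact (smul_ne_zero hpne hz'ne) h0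
  -- the closure set for the sphere maps
  set Ssph : Set ((Fin n → ℚ_[p]) → Fin n → ℚ_[p]) :=
    {f | ∃ k : ℤ, f = sphereMap p (M k)} with hSsph
  set C : Set ((Fin n → ℚ_[p]) × (Fin n → ℚ_[p])) :=
    closure ((fun f => (f e, f Y)) '' Ssph) with hCdef
  -- for each tolerance, a pair of sphere images that are close
  have keypair : ∀ ε : ℝ, 0 < ε → ∃ q : (Fin n → ℚ_[p]) × (Fin n → ℚ_[p]),
      q ∈ C ∧ q.1 ∈ Metric.sphere (0 : Fin n → ℚ_[p]) 1 ∧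
      q.2 ∈ Metric.sphere (0 : Fin n → ℚ_[p]) 1 ∧ dist q.1 q.2 ≤ ε := by
    intro ε hε
    obtain ⟨k, hk1, hk2⟩ := hj (min ε 1) (lt_min hε one_pos)
    set A := M k with hA
    set u := A.mulVec e with hu
    set w := A.mulVec ((p : ℚ_[p]) • z') with hw
    have hwnorm : ‖w‖ < min ε 1 := by
      rw [hw, Matrix.mulVec_smul, norm_smul, Padic.norm_p]
      calc ((p : ℝ))⁻¹ * ‖A.mulVec z'‖ ≤ 1 * ‖A.mulVec z'‖ := by
            refine mul_le_mul_of_nonneg_right ?_ (norm_nonneg _)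
            rw [inv_le_one_iff₀]
            right
            exact_mod_cast (Fact.out : p.Prime).one_le
        _ = ‖A.mulVec z'‖ := one_mul _
        _ < min ε 1 := hk1
    have hwu : ‖w‖ < ‖u‖ := lt_of_lt_of_le (lt_of_lt_of_le hwnorm (min_le_right _ _)) hk2
    have huY : A.mulVec Y = u + w := by
      rw [hY, Matrix.mulVec_add]
    have hYu : ‖A.mulVec Y‖ = ‖u‖ := by
      rw [huY]
      exact aux_pi_norm_add_eq_left p u w hwu
    have hune : u ≠ 0 := by
      intro h0
      rw [h0, norm_zero] at hk2
      linarith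
    obtain ⟨m, hm⟩ := aux_exists_zpow_norm p u hune
    have hlam : realToPadic p ‖u‖ = (p : ℚ_[p]) ^ m := by rw [hm, aux_realToPadic_zpow]
    have hlamnorm : ‖realToPadic p ‖u‖‖ = ‖u‖⁻¹ := by
      rw [hlam, aux_norm_padic_zpow, hm, zpow_neg]
    have hfX : sphereMap p A e = realToPadic p ‖u‖ • u := rfl
    have hYu' : ‖u + w‖ = ‖u‖ := by rw [← huY]; exact hYu
    have hfY : sphereMap p A Y = realToPadic p ‖u‖ • (u + w) := by
      unfold sphereMap
      rw [huY, hYu']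
    have hupos : (0 : ℝ) < ‖u‖ := norm_pos_iff.mpr hune
    have hfXnorm : ‖sphereMap p A e‖ = 1 := by
      rw [hfX, norm_smul, hlamnorm, inv_mul_cancel₀ (ne_of_gt hupos)]
    have hfYnorm : ‖sphereMap p A Y‖ = 1 := by
      rw [hfY, norm_smul, hlamnorm, hYu']
      exact inv_mul_cancel₀ (ne_of_gt hupos)
    refine ⟨(sphereMap p A e, sphereMap p A Y), ?_, ?_, ?_, ?_⟩
    · exact subset_closure ⟨sphereMap p A, ⟨k, rfl⟩, rfl⟩
    · rw [mem_sphere_zero_iff_norm]; exact hfXnorm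
    · rw [mem_sphere_zero_iff_norm]; exact hfYnorm
    · have hdiff : sphereMap p A e - sphereMap p A Y = realToPadic p ‖u‖ • (-w) := by
        rw [hfX, hfY, ← smul_sub]
        congr 1
        abel
      rw [dist_eq_norm, hdiff, norm_smul, hlamnorm, norm_neg]
      calc ‖u‖⁻¹ * ‖w‖ ≤ 1 * ‖w‖ := by
            refine mul_le_mul_of_nonneg_right ?_ (norm_nonneg _)
            rw [inv_le_one_iff₀]
            right
            exact hk2
        _ = ‖w‖ := one_mul _
        _ ≤ ε := le_of_lt (lt_of_lt_of_le hwnorm (min_le_left _ _))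
  -- compactness argument to produce the diagonal limit point
  set K : Set ((Fin n → ℚ_[p]) × (Fin n → ℚ_[p])) :=
    (Metric.sphere (0 : Fin n → ℚ_[p]) 1) ×ˢ (Metric.sphere (0 : Fin n → ℚ_[p]) 1) with hK
  have hKcomp : IsCompact K := (isCompact_sphere _ _).prod (isCompact_sphere _ _)
  set F : ℕ → Set ((Fin n → ℚ_[p]) × (Fin n → ℚ_[p])) :=
    fun m => C ∩ K ∩ {q | dist q.1 q.2 ≤ 1 / (m + 1)} with hF
  have hFclosed : ∀ m, IsClosed (F m) := by
    intro m
    refine ((isClosed_closure.inter (Metric.isClosed_sphere.prod Metric.isClosed_sphere)).inter ?_)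
    exact isClosed_le (continuous_fst.dist continuous_snd) continuous_const
  have hFcomp : ∀ m, IsCompact (F m) := fun m =>
    hKcomp.of_isClosed_subset (hFclosed m) (fun q hq => hq.1.2)
  have hFne : ∀ m : ℕ, (F m).Nonempty := by
    intro m
    have hpos : 0 < 1 / ((m : ℝ) + 1) := by positivity
    obtain ⟨q, hq1, hq2, hq3, hq4⟩ := keypair (1 / (m + 1)) hpos
    exact ⟨q, ⟨⟨hq1, ⟨hq2, hq3⟩⟩, hq4⟩⟩
  have hFanti : ∀ a b : ℕ, a ≤ b → F b ⊆ F a := by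
    intro a b hab q hq
    obtain ⟨hq1, hq2⟩ := hq
    simp only [Set.mem_setOf_eq] at hq2
    refine ⟨hq1, ?_⟩
    simp only [Set.mem_setOf_eq]
    refine le_trans hq2 ?_
    apply one_div_le_one_div_of_le (by positivity)
    exact_mod_cast Nat.add_le_add_right hab 1
  have hFdir : Directed (· ⊇ ·) F := fun a b =>
    ⟨max a b, hFanti a (max a b) (le_max_left a b), hFanti b (max a b) (le_max_right a b)⟩
  obtain ⟨q, hq⟩ := IsCompact.nonempty_iInter_of_directed_nonempty_isCompact_isClosed
    F hFdir hFne hFcomp hFclosed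
  simp only [Set.mem_iInter] at hq
  have hqdist : q.1 = q.2 := by
    by_contra hne
    have hdpos : 0 < dist q.1 q.2 := dist_pos.mpr hne
    obtain ⟨m, hm⟩ := exists_nat_one_div_lt hdpos
    exact absurd (hq m).2 (not_le.mpr hm)
  have hqC : (q.1, q.1) ∈ C := by
    have hqeq : (q.1, q.1) = q := by
      rw [Prod.ext_iff]
      exact ⟨rfl, hqdist⟩
    rw [hqeq]
    exact (hq 0).1.1
  have hq1sp : q.1 ∈ Metric.sphere (0 : Fin n → ℚ_[p]) 1 := (hq 0).1.2.1
  exact h e hXsp Y hYsp hXY q.1 hq1sp hqC
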